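/- arXiv:2002.05053 — 2 statements merged into one kernel-verified Lean document; each statement's English description precedes it below -/
import Mathlib

section
/- Let N ∈ ℕ, θ = N + 1/2, ω ∈ ℝ, and let v⁺ ∈ H_N with Fourier coefficients v⁺_k (k ∈ ℤ³, |k|² ≤ N). Define W(t) = Σ_{|k|²≤N} e^{(θ − |k|² − iω|k|²)t} · v⁺_k · e_k for t ≤ 0. Then W solves ∂_t W − (1+iω)ΔW − θW = 0 on (−∞,0) × 𝕋³ with P_N W(0) = v⁺, W belongs to L²(ℝ₋, H), and ‖W‖_{L²(ℝ₋,H)} ≤ ‖v⁺‖_H. -/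
open MeasureTheory Real Complex
open scoped ComplexConjugate ENNReal

noncomputable section

/-- The lattice ℤ³ of Fourier modes. -/
abbrev Z3 := Fin 3 → ℤ

/-- Physical space ℝ³; 2π-periodic functions on it represent functions on the torus 𝕋³. -/
abbrev R3 := Fin 3 → ℝ

/-- |k|² = Σⱼ kⱼ², the eigenvalue of −Δ on the torus corresponding to `e_k`. -/
def ksq (k : Z3) : ℤ := ∑ j, (k j) ^ 2

/-- A fundamental domain (−π,π]³ of the torus 𝕋³ = (ℝ/2πℤ)³. -/
def Q3 : Set R3 := Set.univ.pi fun _ => Set.Ioc (-π) π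

/-- The measure on the torus: Lebesgue measure on the fundamental domain. -/
def μT : Measure R3 := volume.restrict Q3

/-- The orthonormal Fourier basis `e_k(x) = (2π)^{−3/2} e^{i k·x}` of `H = L²(𝕋³;ℂ)`. -/
def ek (k : Z3) (x : R3) : ℂ :=
  (((2 * π) ^ (-(3 : ℝ) / 2) : ℝ) : ℂ) *
    Complex.exp (Complex.I * ∑ j, (k j : ℂ) * (x j : ℂ))

/-- The k-th Fourier coefficient of a function on the torus: `⟨e_k, f⟩_{L²}`. -/
def coefFn (k : Z3) (f : R3 → ℂ) : ℂ := ∫ x, conj (ek k x) * f x ∂μT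

lemma measurableSet_Q3 : MeasurableSet Q3 :=
  MeasurableSet.univ_pi fun _ => measurableSet_Ioc

instance : IsFiniteMeasure μT := by
  constructor
  rw [μT, Measure.restrict_apply_univ, Q3, volume_pi_pi]
  simp only [Real.volume_Ioc, Finset.prod_const, Finset.card_univ, Fintype.card_fin]
  exact ENNReal.pow_lt_top ENNReal.ofReal_lt_top

lemma continuous_ek (k : Z3) : Continuous (ek k) := by
  unfold ek
  fun_prop

lemma norm_ek (k : Z3) (x : R3) : ‖ek k x‖ = (2 * π) ^ (-(3 : ℝ) / 2) := by
  unfold ek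
  rw [norm_mul, Complex.norm_real]
  have h : (Complex.I * ∑ j, (k j : ℂ) * (x j : ℂ)).re = 0 := by
    simp [Complex.mul_re, Complex.re_sum, Complex.im_sum]
  rw [Complex.norm_exp, h, Real.exp_zero, mul_one,
    Real.norm_of_nonneg (Real.rpow_nonneg (by positivity) _)]

lemma integrable_bdd {E : Type*} [NormedAddCommGroup E] {f : R3 → E}
    (hf : Continuous f) (C : ℝ) (hC : ∀ x, ‖f x‖ ≤ C) : Integrable f μT :=
  (integrable_const C).mono' hf.aestronglyMeasurable (ae_of_all _ hC)

lemma oneD (m : ℤ) :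
    ∫ y : ℝ, (Set.Ioc (-π) π).indicator
      (fun y : ℝ => ((((2 * π)⁻¹ : ℝ)) : ℂ) * Complex.exp (Complex.I * m * y)) y
      = if m = 0 then 1 else 0 := by
  rw [MeasureTheory.integral_indicator measurableSet_Ioc,
    ← intervalIntegral.integral_of_le (by linarith [Real.pi_pos] : -π ≤ π),
    intervalIntegral.integral_const_mul]
  by_cases hm : m = 0
  · subst hm
    simp only [Int.cast_zero, mul_zero, zero_mul, Complex.exp_zero, if_true]
    rw [intervalIntegral.integral_const, sub_neg_eq_add]
    simp only [real_smul, mul_one, ← Complex.ofReal_mul]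
    norm_cast
    field_simp
    ring
  · have hc : (Complex.I * m : ℂ) ≠ 0 := by
      simp [Complex.ext_iff, hm]
    rw [if_neg hm]
    have : ∀ y : ℝ, Complex.I * m * y = Complex.I * m * y := fun _ => rfl
    rw [show (fun y : ℝ => Complex.exp (Complex.I * m * y)) = fun y : ℝ => Complex.exp ((Complex.I * m) * y) from rfl]
    rw [integral_exp_mul_complex hc]
    have hexp : Complex.exp (Complex.I * m * (π : ℂ)) = Complex.exp (Complex.I * m * ((-π : ℝ) : ℂ)) := by
      rw [show (Complex.I * m * (π : ℂ)) = Complex.I * m * ((-π : ℝ) : ℂ) + m * (2 * π * Complex.I) by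
        push_cast; ring]
      rw [Complex.exp_add, Complex.exp_int_mul_two_pi_mul_I, mul_one]
    rw [hexp, sub_self, zero_div, mul_zero]

lemma indicator_pi_prod (s : Fin 3 → Set ℝ) (f : Fin 3 → ℝ → ℂ) (x : R3) :
    (Set.univ.pi s).indicator (fun x : R3 => ∏ j, f j (x j)) x
      = ∏ j, (s j).indicator (f j) (x j) := by
  by_cases h : x ∈ Set.univ.pi s
  · rw [Set.indicator_of_mem h]
    exact Finset.prod_congr rfl fun j _ =>
      (Set.indicator_of_mem (h j (Set.mem_univ j)) _).symm
  · rw [Set.indicator_of_notMem h]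
    obtain ⟨j, hj⟩ : ∃ j, x j ∉ s j := by simpa [Set.mem_pi] using h
    exact (Finset.prod_eq_zero (Finset.mem_univ j) (Set.indicator_of_notMem hj _)).symm

lemma conj_ek_mul_ek (k l : Z3) (x : R3) :
    conj (ek k x) * ek l x
      = ∏ j, ((((2 * π)⁻¹ : ℝ)) : ℂ) * Complex.exp (Complex.I * ((l j : ℤ) - k j : ℤ) * x j) := by
  unfold ek
  rw [map_mul, Complex.conj_ofReal, ← Complex.exp_conj]
  have hconj : conj (Complex.I * ∑ j, (k j : ℂ) * (x j : ℂ))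
      = -(Complex.I * ∑ j, (k j : ℂ) * (x j : ℂ)) := by
    rw [map_mul, Complex.conj_I, map_sum]
    simp only [map_mul, map_intCast, Complex.conj_ofReal]
    ring
  rw [hconj]
  rw [show ((((2 * π) ^ (-(3:ℝ) / 2) : ℝ)) : ℂ) * Complex.exp (-(Complex.I * ∑ j, (k j : ℂ) * (x j : ℂ)))
      * ((((2 * π) ^ (-(3:ℝ) / 2) : ℝ) : ℂ) * Complex.exp (Complex.I * ∑ j, (l j : ℂ) * (x j : ℂ)))
      = ((((2 * π) ^ (-(3:ℝ) / 2) : ℝ)) : ℂ) * (((2 * π) ^ (-(3:ℝ) / 2) : ℝ) : ℂ)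
        * (Complex.exp (-(Complex.I * ∑ j, (k j : ℂ) * (x j : ℂ))) * Complex.exp (Complex.I * ∑ j, (l j : ℂ) * (x j : ℂ))) from by ring]
  rw [← Complex.exp_add, ← Complex.ofReal_mul,
    ← Real.rpow_add (by positivity : (0:ℝ) < 2 * π)]
  have h1 : (-(3:ℝ)/2 + -(3:ℝ)/2) = ((-3 : ℤ) : ℝ) := by norm_num
  rw [h1, Real.rpow_intCast]
  have h2 : ((2 * π : ℝ) ^ (-3 : ℤ)) = ((2*π)⁻¹)^(3:ℕ) := by
    rw [zpow_neg, inv_pow]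
    norm_cast
  have h3 : -(Complex.I * ∑ j, (k j : ℂ) * (x j : ℂ)) + Complex.I * ∑ j, (l j : ℂ) * (x j : ℂ)
      = ∑ j, Complex.I * ((l j : ℤ) - k j : ℤ) * (x j : ℂ) := by
    rw [Finset.mul_sum, Finset.mul_sum, ← Finset.sum_neg_distrib, ← Finset.sum_add_distrib]
    exact Finset.sum_congr rfl fun j _ => by push_cast; ring
  rw [h3, Complex.exp_sum, h2,
    Finset.prod_mul_distrib, Finset.prod_const, Finset.card_univ, Fintype.card_fin]
  push_cast
  ring

lemma ek_ortho (k l : Z3) :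
    ∫ x, conj (ek k x) * ek l x ∂μT = if k = l then 1 else 0 := by
  set g : Fin 3 → ℝ → ℂ := fun j y =>
    ((((2 * π)⁻¹ : ℝ)) : ℂ) * Complex.exp (Complex.I * (((l j - k j : ℤ)) : ℂ) * y) with hg
  have hfe : (fun x : R3 => conj (ek k x) * ek l x) = fun x : R3 => ∏ j, g j (x j) := by
    funext x
    rw [conj_ek_mul_ek k l x]
  rw [μT, hfe, ← MeasureTheory.integral_indicator measurableSet_Q3]
  rw [show (fun x : R3 => Q3.indicator (fun x : R3 => ∏ j, g j (x j)) x)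
      = fun x : R3 => ∏ j, (Set.Ioc (-π) π).indicator (g j) (x j) from
    funext fun x => indicator_pi_prod _ g x]
  rw [volume_pi, MeasureTheory.integral_fintype_prod_eq_prod (𝕜 := ℂ)
    (f := fun j => (Set.Ioc (-π) π).indicator (g j))]
  rw [Finset.prod_congr rfl fun j (_ : j ∈ Finset.univ) => oneD (l j - k j)]
  by_cases h : k = l
  · subst h; simp
  · rw [if_neg h]
    obtain ⟨j, hj⟩ : ∃ j, k j ≠ l j := by
      by_contra hc
      push_neg at hc
      exact h (funext hc)
    exact Finset.prod_eq_zero (Finset.mem_univ j) (if_neg (sub_ne_zero.mpr (Ne.symm hj)))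


lemma integrable_ek_mul (k : Z3) {f : R3 → ℂ} (hf : Continuous f) (C : ℝ)
    (hC : ∀ x, ‖f x‖ ≤ C) :
    Integrable (fun x => conj (ek k x) * f x) μT := by
  refine integrable_bdd (((continuous_star).comp (continuous_ek k)).mul hf)
    ((2 * π) ^ (-(3:ℝ)/2) * C) fun x => ?_
  rw [norm_mul, RCLike.norm_conj, norm_ek]
  exact mul_le_mul_of_nonneg_left (hC x) (Real.rpow_nonneg (by positivity) _)

lemma conj_mul_self_re (z : ℂ) : (conj z * z).re = ‖z‖ ^ 2 := by
  rw [mul_comm, Complex.mul_conj]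
  rw [Complex.normSq_eq_norm_sq]
  norm_cast

lemma coefFn_finsum (S : Finset Z3) (c : Z3 → ℂ) (k : Z3) :
    coefFn k (fun x => ∑ l ∈ S, c l * ek l x) = if k ∈ S then c k else 0 := by
  unfold coefFn
  have h1 : (fun x => conj (ek k x) * ∑ l ∈ S, c l * ek l x)
      = fun x => ∑ l ∈ S, c l * (conj (ek k x) * ek l x) := by
    funext x; rw [Finset.mul_sum]; exact Finset.sum_congr rfl fun l _ => by ring
  rw [h1, MeasureTheory.integral_finset_sum _ (fun l _ =>
    (integrable_ek_mul k (continuous_ek l) ((2 * π) ^ (-(3:ℝ)/2))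
      (fun x => le_of_eq (norm_ek l x))).const_mul _)]
  simp_rw [MeasureTheory.integral_const_mul, ek_ortho]
  simp only [mul_ite, mul_one, mul_zero]
  exact Finset.sum_ite_eq S k c

lemma integral_norm_sq_finsum (S : Finset Z3) (c : Z3 → ℂ) :
    ∫ x, ‖∑ l ∈ S, c l * ek l x‖ ^ 2 ∂μT = ∑ l ∈ S, ‖c l‖ ^ 2 := by
  set f : R3 → ℂ := fun x => ∑ l ∈ S, c l * ek l x with hf
  have hfc : Continuous f :=
    continuous_finset_sum _ fun l _ => continuous_const.mul (continuous_ek l)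
  set C : ℝ := ∑ l ∈ S, ‖c l‖ * (2 * π) ^ (-(3:ℝ)/2) with hC
  have hfb : ∀ x, ‖f x‖ ≤ C := fun x => le_trans (norm_sum_le _ _)
    (le_of_eq (Finset.sum_congr rfl fun l _ => by rw [norm_mul, norm_ek]))
  have hCpos : 0 ≤ C := le_trans (norm_nonneg _) (hfb (fun _ => 0))
  have key : ∫ x, conj (f x) * f x ∂μT = ∑ l ∈ S, conj (c l) * c l := by
    have h1 : (fun x => conj (f x) * f x)
        = fun x => ∑ l ∈ S, conj (c l) * (conj (ek l x) * f x) := by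
      funext x
      conv_lhs => rw [hf]
      simp only [map_sum, map_mul]
      rw [Finset.sum_mul]
      exact Finset.sum_congr rfl fun l _ => by ring
    rw [h1, MeasureTheory.integral_finset_sum _ (fun l _ =>
      (integrable_ek_mul l hfc C hfb).const_mul _)]
    refine Finset.sum_congr rfl fun l hl => ?_
    rw [MeasureTheory.integral_const_mul]
    have h2 : ∫ x, conj (ek l x) * f x ∂μT = c l := by
      have h3 := coefFn_finsum S c l
      unfold coefFn at h3
      rw [hf, h3, if_pos hl]
    rw [h2]
  have hint : Integrable (fun x => conj (f x) * f x) μT :=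
    integrable_bdd ((continuous_star.comp hfc).mul hfc) (C * C) fun x => by
      rw [norm_mul, RCLike.norm_conj]
      exact mul_le_mul (hfb x) (hfb x) (norm_nonneg _) hCpos
  have h4 : ∀ x, ‖f x‖ ^ 2 = (conj (f x) * f x).re := fun x => (conj_mul_self_re _).symm
  calc ∫ x, ‖f x‖ ^ 2 ∂μT = ∫ x, (conj (f x) * f x).re ∂μT := by simp_rw [h4]
    _ = (∫ x, conj (f x) * f x ∂μT).re := by
        have := integral_re (μ := μT) hint
        simpa using this
    _ = (∑ l ∈ S, conj (c l) * c l).re := by rw [key]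
    _ = ∑ l ∈ S, ‖c l‖ ^ 2 := by
        rw [Complex.re_sum]
        exact Finset.sum_congr rfl fun l _ => conj_mul_self_re _

def SN (N : ℕ) : Finset Z3 :=
  Finset.filter (fun k => ksq k ≤ (N : ℤ))
    (Finset.Icc (fun _ => -(N : ℤ)) (fun _ => (N : ℤ)))

lemma mem_SN {N : ℕ} {k : Z3} : k ∈ SN N ↔ (ksq k : ℝ) ≤ (N : ℝ) := by
  rw [SN, Finset.mem_filter]
  constructor
  · rintro ⟨-, h⟩; exact_mod_cast h
  · intro h
    have h' : ksq k ≤ (N : ℤ) := by exact_mod_cast h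
    refine ⟨Finset.mem_Icc.mpr ⟨fun j => ?_, fun j => ?_⟩, h'⟩ <;>
    · have h1 : (k j) ^ 2 ≤ ksq k :=
        Finset.single_le_sum (f := fun j => (k j) ^ 2) (fun i _ => sq_nonneg _)
          (Finset.mem_univ j)
      have h2 : |k j| ≤ (k j) ^ 2 := by nlinarith [abs_nonneg (k j), _root_.sq_abs (k j)]
      have := le_trans h2 (le_trans h1 h')
      simp only [abs_le] at this
      simp [this.1, this.2]

/-- For `v⁺ ∈ H_N` (given by its Fourier coefficients, supported on
`|k|² ≤ N`), the function `W(t) = Σ_{|k|²≤N} e^{(θ−|k|²−iω|k|²)t} v⁺_k e_k`, θ = N + 1/2,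
solves (mode-by-mode, equivalently) `∂ₜW − (1+iω)ΔW − θW = 0` on (−∞,0)×𝕋³ with
`P_N W(0) = v⁺`, belongs to `L²(ℝ₋,H)` and satisfies `‖W‖_{L²(ℝ₋,H)} ≤ ‖v⁺‖_H`. -/
theorem stmt3 (N : ℕ) (θ : ℝ) (hθ : θ = (N : ℝ) + 1/2) (ω : ℝ) (vplus : Z3 → ℂ)
    (hsupp : ∀ k : Z3, ¬((ksq k : ℝ) ≤ (N : ℝ)) → vplus k = 0)
    (W : ℝ → R3 → ℂ)
    (hW : W = fun (t : ℝ) (x : R3) =>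
      ∑' k : Z3, if (ksq k : ℝ) ≤ (N : ℝ) then
        Complex.exp (((θ : ℂ) - (ksq k : ℂ) - (ω : ℂ) * (ksq k : ℂ) * Complex.I) * (t : ℂ)) *
          vplus k * ek k x
      else 0) :
    -- the equation ∂ₜW − (1+iω)ΔW − θW = 0, mode by mode (Δe_k = −|k|² e_k):
    (∀ k : Z3, ∀ t < (0 : ℝ),
      HasDerivAt (fun s : ℝ => coefFn k (W s))
        (((θ : ℂ) - (1 + (ω : ℂ) * Complex.I) * (ksq k : ℂ)) * coefFn k (W t)) t) ∧
    -- the initial condition P_N W(0) = v⁺: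
    (∀ k : Z3, (ksq k : ℝ) ≤ (N : ℝ) → coefFn k (W 0) = vplus k) ∧
    -- W ∈ L²(ℝ₋,H) with ‖W‖_{L²(ℝ₋,H)} ≤ ‖v⁺‖_H (squared form):
    (∫⁻ t in Set.Iic (0 : ℝ), ∫⁻ x, (‖W t x‖₊ : ℝ≥0∞) ^ 2 ∂μT)
      ≤ ENNReal.ofReal (∑' k : Z3, ‖vplus k‖ ^ 2) := by
  set S : Finset Z3 := SN N with hS
  set cc : ℝ → Z3 → ℂ := fun s k =>
    Complex.exp (((θ : ℂ) - (ksq k : ℂ) - (ω : ℂ) * (ksq k : ℂ) * Complex.I) * (s : ℂ)) *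
      vplus k with hcc
  have hWs : ∀ s : ℝ, W s = fun x => ∑ k ∈ S, cc s k * ek k x := by
    intro s
    funext x
    simp only [hW]
    rw [tsum_eq_sum (s := S) (fun k hk => if_neg fun h => hk (mem_SN.mpr h))]
    exact Finset.sum_congr rfl fun k hk => if_pos (mem_SN.mp hk)
  have hcoef : ∀ (s : ℝ) (k : Z3), coefFn k (W s) = if k ∈ S then cc s k else 0 := by
    intro s k
    rw [hWs s]
    exact coefFn_finsum S (cc s) k
  refine ⟨?_, ?_, ?_⟩
  · -- the ODE
    intro k t ht
    have hfun : (fun s : ℝ => coefFn k (W s)) = fun s : ℝ => if k ∈ S then cc s k else 0 :=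
      funext fun s => hcoef s k
    rw [hfun, hcoef t k]
    by_cases hk : k ∈ S
    · simp only [if_pos hk]
      have h1 : HasDerivAt (fun s : ℝ => (s : ℂ)) 1 t := by
        simpa using (hasDerivAt_id t).ofReal_comp
      have h2 := ((h1.const_mul
        ((θ : ℂ) - (ksq k : ℂ) - (ω : ℂ) * (ksq k : ℂ) * Complex.I)).cexp).mul_const (vplus k)
      refine h2.congr_deriv ?_
      rw [hcc]
      ring
    · simp only [if_neg hk, mul_zero]
      exact hasDerivAt_const t 0
  · -- initial condition
    intro k hk
    rw [hcoef 0 k, if_pos (mem_SN.mpr hk), hcc]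
    simp
  · -- the L² bound
    have hWnorm : ∀ t : ℝ, (∫⁻ x, (‖W t x‖₊ : ℝ≥0∞) ^ 2 ∂μT)
        = ENNReal.ofReal (∑ k ∈ S, Real.exp (2 * (θ - (ksq k : ℝ)) * t) * ‖vplus k‖ ^ 2) := by
      intro t
      have hWt := hWs t
      have hcont : Continuous (W t) := by
        rw [hWt]
        exact continuous_finset_sum _ fun k _ => continuous_const.mul (continuous_ek k)
      set C : ℝ := ∑ l ∈ S, ‖cc t l‖ * (2 * π) ^ (-(3:ℝ)/2) with hC
      have hfb : ∀ x, ‖W t x‖ ≤ C := fun x => by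
        rw [hWt]
        exact le_trans (norm_sum_le _ _)
          (le_of_eq (Finset.sum_congr rfl fun l _ => by rw [norm_mul, norm_ek]))
      have hCpos : 0 ≤ C := le_trans (norm_nonneg _) (hfb fun _ => 0)
      have hint : Integrable (fun x => ‖W t x‖ ^ 2) μT := by
        refine integrable_bdd (by fun_prop) (C * C) fun x => ?_
        rw [Real.norm_of_nonneg (sq_nonneg _), sq]
        exact mul_le_mul (hfb x) (hfb x) (norm_nonneg _) hCpos
      have hnormcc : ∀ k ∈ S, ‖cc t k‖ ^ 2 = Real.exp (2 * (θ - (ksq k : ℝ)) * t) * ‖vplus k‖ ^ 2 := by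
        intro k _
        rw [hcc]
        simp only [norm_mul, mul_pow]
        congr 1
        rw [Complex.norm_exp]
        have hre : ((((θ : ℂ) - (ksq k : ℂ) - (ω : ℂ) * (ksq k : ℂ) * Complex.I) * (t : ℂ)).re)
            = (θ - (ksq k : ℝ)) * t := by
          simp [Complex.mul_re]
        rw [hre, ← Real.exp_nat_mul]
        ring_nf
      calc (∫⁻ x, (‖W t x‖₊ : ℝ≥0∞) ^ 2 ∂μT)
          = ∫⁻ x, ENNReal.ofReal (‖W t x‖ ^ 2) ∂μT := by
            refine lintegral_congr fun x => ?_
            rw [ENNReal.ofReal_pow (norm_nonneg _), ofReal_norm, enorm_eq_nnnorm]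
        _ = ENNReal.ofReal (∫ x, ‖W t x‖ ^ 2 ∂μT) :=
            (MeasureTheory.ofReal_integral_eq_lintegral_ofReal hint
              (ae_of_all _ fun x => sq_nonneg _)).symm
        _ = ENNReal.ofReal (∑ k ∈ S, ‖cc t k‖ ^ 2) := by
            rw [hWt, integral_norm_sq_finsum]
        _ = ENNReal.ofReal (∑ k ∈ S, Real.exp (2 * (θ - (ksq k : ℝ)) * t) * ‖vplus k‖ ^ 2) := by
            rw [Finset.sum_congr rfl hnormcc]
    simp_rw [hWnorm]
    have htsum : (∑' k : Z3, ‖vplus k‖ ^ 2) = ∑ k ∈ S, ‖vplus k‖ ^ 2 :=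
      tsum_eq_sum fun k hk => by
        rw [hsupp k fun h => hk (mem_SN.mpr h), norm_zero]
        norm_num
    rw [htsum]
    calc (∫⁻ t in Set.Iic (0:ℝ),
            ENNReal.ofReal (∑ k ∈ S, Real.exp (2 * (θ - (ksq k : ℝ)) * t) * ‖vplus k‖ ^ 2))
        ≤ ∫⁻ t in Set.Iic (0:ℝ),
            ENNReal.ofReal (Real.exp t) * ENNReal.ofReal (∑ k ∈ S, ‖vplus k‖ ^ 2) := by
          refine setLIntegral_mono (by fun_prop) fun t ht => ?_
          rw [← ENNReal.ofReal_mul (Real.exp_nonneg t)]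
          refine ENNReal.ofReal_le_ofReal ?_
          rw [Finset.mul_sum]
          refine Finset.sum_le_sum fun k hk => ?_
          refine mul_le_mul_of_nonneg_right ?_ (sq_nonneg _)
          refine Real.exp_le_exp.mpr ?_
          have hkN : (ksq k : ℝ) ≤ (N : ℝ) := mem_SN.mp hk
          have h1 : (1 : ℝ) ≤ 2 * (θ - (ksq k : ℝ)) := by rw [hθ]; linarith
          have ht0 : t ≤ 0 := ht
          nlinarith
      _ = ENNReal.ofReal (∑ k ∈ S, ‖vplus k‖ ^ 2)
            * ∫⁻ t in Set.Iic (0:ℝ), ENNReal.ofReal (Real.exp t) := by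
          rw [lintegral_mul_const _ (by fun_prop)]
          ring
      _ = ENNReal.ofReal (∑ k ∈ S, ‖vplus k‖ ^ 2) := by
          rw [← MeasureTheory.ofReal_integral_eq_lintegral_ofReal (integrableOn_exp_Iic 0)
            (ae_of_all _ fun x => (Real.exp_pos x).le), integral_exp_Iic_zero,
            ENNReal.ofReal_one, mul_one]
end
end

section
/- Let ω ≠ 0 and μ be real numbers, let I ⊂ ℝ be an open interval, let β: I → ℂ be differentiable, and let Z, g: I → ℂ with Z differentiable satisfy Z'(t) + μ·Z(t) + e^{2iωt}β(t)·conj(Z(t)) = g(t) on I. Then the function U(t) := Z(t) − (i/(2ω))·e^{2iωt}·β(t)·conj(Z(t)) is differentiable on I and satisfies the identity U'(t) + μ·Z(t) = g(t) − (i/(2ω))·e^{2iωt}·(β'(t) − μβ(t))·conj(Z(t)) + (i/(2ω))·|β(t)|²·Z(t) − (i/(2ω))·e^{2iωt}·β(t)·conj(g(t)) for all t ∈ I. -/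
open Complex
open scoped ComplexConjugate

noncomputable section

/-- **temporal averaging identity.** If `Z' + μZ + e^{2iωt}β(t)·conj Z = g`
on an open interval `I`, then `U(t) = Z(t) − (i/(2ω)) e^{2iωt} β(t) conj(Z(t))` satisfies
`U' + μZ = g − (i/(2ω)) e^{2iωt}(β' − μβ)·conj Z + (i/(2ω))|β|² Z − (i/(2ω)) e^{2iωt} β·conj g`. -/
theorem stmt10 (ω μ : ℝ) (hω : ω ≠ 0) (I : Set ℝ) (hIopen : IsOpen I)
    (hIconn : I.OrdConnected)
    (β βd Z g : ℝ → ℂ)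
    (hβ : ∀ t ∈ I, HasDerivAt β (βd t) t)
    (hZ : ∀ t ∈ I, HasDerivAt Z
      (g t - (μ : ℂ) * Z t -
        Complex.exp (2 * (ω : ℂ) * Complex.I * (t : ℂ)) * β t * conj (Z t)) t) :
    ∀ t ∈ I,
      HasDerivAt (fun s : ℝ => Z s -
          Complex.I / (2 * (ω : ℂ)) * Complex.exp (2 * (ω : ℂ) * Complex.I * (s : ℂ)) *
            β s * conj (Z s))
        (g t - (μ : ℂ) * Z t
          - Complex.I / (2 * (ω : ℂ)) * Complex.exp (2 * (ω : ℂ) * Complex.I * (t : ℂ)) *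
              (βd t - (μ : ℂ) * β t) * conj (Z t)
          + Complex.I / (2 * (ω : ℂ)) * ((‖β t‖ ^ 2 : ℝ) : ℂ) * Z t
          - Complex.I / (2 * (ω : ℂ)) * Complex.exp (2 * (ω : ℂ) * Complex.I * (t : ℂ)) *
              β t * conj (g t)) t := by
  intro t ht
  have hω2 : (2 * (ω : ℂ)) ≠ 0 := by
    simp [Complex.ofReal_ne_zero, hω]
  -- derivative of exponential
  have hE : HasDerivAt (fun s : ℝ => Complex.exp (2 * (ω : ℂ) * Complex.I * (s : ℂ)))
      (2 * (ω : ℂ) * Complex.I * Complex.exp (2 * (ω : ℂ) * Complex.I * (t : ℂ))) t := by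
    have h0 : HasDerivAt (fun s : ℝ => 2 * (ω : ℂ) * Complex.I * (s : ℂ))
        (2 * (ω : ℂ) * Complex.I) t := by
      simpa using (Complex.ofRealCLM.hasDerivAt (x := t)).const_mul (2 * (ω:ℂ) * Complex.I)
    simpa [mul_comm] using h0.cexp
  have hZt := hZ t ht
  have hZc : HasDerivAt (fun s : ℝ => conj (Z s))
      (conj (g t - (μ : ℂ) * Z t -
        Complex.exp (2 * (ω : ℂ) * Complex.I * (t : ℂ)) * β t * conj (Z t))) t := hZt.star
  have hU := hZt.sub ((((hE.const_mul (Complex.I / (2 * (ω : ℂ)))).mul (hβ t ht)).mul hZc))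
  convert hU using 1
  case e'_4 => rfl
  case e'_8 => rfl
  -- now an algebraic identity
  have hconjE : conj (Complex.exp (2 * (ω:ℂ) * Complex.I * (t:ℂ)))
      = Complex.exp (-(2 * (ω:ℂ) * Complex.I * (t:ℂ))) := by
    rw [← Complex.exp_conj]
    congr 1
    simp only [map_mul, Complex.conj_I, Complex.conj_ofReal, map_ofNat]
    ring
  have hEneg : Complex.exp (-(2 * (ω:ℂ) * Complex.I * (t:ℂ)))
      = (Complex.exp (2 * (ω:ℂ) * Complex.I * (t:ℂ)))⁻¹ := Complex.exp_neg _
  have hnorm : ((‖β t‖ ^ 2 : ℝ) : ℂ) = β t * conj (β t) := by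
    rw [Complex.mul_conj]; norm_cast; exact (Complex.normSq_eq_norm_sq _).symm
  simp only [map_sub, map_mul, Complex.conj_conj, Complex.conj_ofReal, hconjE, hEneg, hnorm]
  have hEne : Complex.exp (2 * (ω:ℂ) * Complex.I * (t:ℂ)) ≠ 0 := Complex.exp_ne_zero _
  field_simp
  ring_nf
  simp [Complex.I_sq]
  have hω' : (ω:ℂ) ≠ 0 := by exact_mod_cast hω
  field_simp
  ring_nf
end
end
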